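/- Let {ℰ} ∪ {𝒢(i,j)}_{1≤i≤j≤N} be independent σ-fields, let 𝒢 be the σ-field they generate, and let Z be a 𝒢-measurable square-integrable real random variable. For each k = 1,…,N let 𝒢̂_k be the σ-field generated by ℰ together with the 𝒢(i,j) with k ∉ {i,j}, and let Z_k be a 𝒢̂_k-measurable square-integrable random variable. Then E(|Z − E(Z|ℰ)|² | ℰ) ≤ Σ_{k=1}^N E(|Z − Z_k|² | ℰ) almost surely. -/

import Mathlib

open MeasureTheory ProbabilityTheory

section StandardSection
variable {Ω : Type*} {m m0 : MeasurableSpace Ω} {μ : Measure Ω}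

theorem memℒp_two_condexp [IsProbabilityMeasure μ] (hm : m ≤ m0) {f : Ω → ℝ}
    (hf : MemLp f 2 μ) : MemLp (μ[f|m]) 2 μ := by
  have hfi : Integrable f μ := hf.integrable (by norm_num)
  set g : Ω → ℝ := ⇑((condExpL2 ℝ ℝ hm (hf.toLp f) : lpMeas ℝ ℝ m 2 μ) : Ω →₂[μ] ℝ) with hg
  have hgmem : MemLp g 2 μ := Lp.memLp _
  have heq : g =ᵐ[μ] μ[f|m] := by
    refine ae_eq_condExp_of_forall_setIntegral_eq hm hfi
      (fun s _ _ => (hgmem.integrable (by norm_num)).integrableOn) (fun s hs hμs => ?_)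
      (aestronglyMeasurable_condExpL2 hm _)
    have h2 := integral_condExpL2_eq (𝕜 := ℝ) hm (hf.toLp f) hs (by simp [measure_ne_top])
    rw [h2]
    exact setIntegral_congr_ae (hm s hs) ((hf.coeFn_toLp).mono fun x hx _ => hx)
  exact hgmem.ae_eq heq

theorem integrable_mul_of_memℒp_two {f g : Ω → ℝ} (hf : MemLp f 2 μ) (hg : MemLp g 2 μ) :
    Integrable (fun ω => f ω * g ω) μ := by
  have h := (((hf.add hg).integrable_sq.sub hf.integrable_sq).sub hg.integrable_sq).div_const 2
  refine h.congr (ae_of_all _ fun x => ?_)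
  simp only [Pi.sub_apply, Pi.add_apply]
  ring

theorem condexp_mul_eq_zero [IsProbabilityMeasure μ] {C : MeasurableSpace Ω} (hCm : C ≤ m)
    (hm : m ≤ m0) {f g : Ω → ℝ} (hf : MemLp f 2 μ) (hg : MemLp g 2 μ)
    (hgm : StronglyMeasurable[m] g) (hf0 : μ[f|m] =ᵐ[μ] 0) :
    μ[fun ω => f ω * g ω|C] =ᵐ[μ] 0 := by
  have hC : C ≤ m0 := hCm.trans hm
  have hfg : Integrable (fun ω => f ω * g ω) μ := integrable_mul_of_memℒp_two hf hg
  have h1 : μ[fun ω => f ω * g ω|m] =ᵐ[μ] 0 := by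
    have hpull : μ[g * f|m] =ᵐ[μ] g * μ[f|m] :=
      condExp_mul_of_stronglyMeasurable_left hgm (hfg.congr (ae_of_all _ fun x => mul_comm (f x) (g x)))
        (hf.integrable (by norm_num))
    have : (fun ω => f ω * g ω) = g * f := by funext x; simp [mul_comm]
    rw [this]
    refine hpull.trans ?_
    filter_upwards [hf0] with x hx
    simp [hx]
  calc μ[fun ω => f ω * g ω|C] =ᵐ[μ] μ[μ[fun ω => f ω * g ω|m]|C] :=
        (condExp_condExp_of_le hCm hm).symm
    _ =ᵐ[μ] μ[(0 : Ω → ℝ)|C] := condExp_congr_ae h1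
    _ =ᵐ[μ] 0 := by rw [condExp_zero]

theorem condexp_sq_condexp_le [IsProbabilityMeasure μ] {C : MeasurableSpace Ω} (hCm : C ≤ m)
    (hm : m ≤ m0) {W : Ω → ℝ} (hW : MemLp W 2 μ) :
    μ[fun ω => (μ[W|m]) ω ^ 2|C] ≤ᵐ[μ] μ[fun ω => W ω ^ 2|C] := by
  have hC : C ≤ m0 := hCm.trans hm
  set A : Ω → ℝ := μ[W|m] with hA
  have hA2 : MemLp A 2 μ := memℒp_two_condexp hm hW
  have hWA2 : MemLp (fun ω => W ω - A ω) 2 μ := by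
    have := hW.sub hA2
    exact this
  have hWi : Integrable W μ := hW.integrable (by norm_num)
  have h0 : μ[fun ω => W ω - A ω|m] =ᵐ[μ] 0 := by
    have := condExp_sub (m := m) hWi integrable_condExp (μ := μ) (f := W) (g := A)
    refine (condExp_congr_ae (ae_of_all _ fun x => ?_)).trans (this.trans ?_)
    · simp [hA]
    · have hAA : μ[A|m] =ᵐ[μ] A := condExp_condExp_of_le le_rfl hm
      filter_upwards [hAA] with x hx
      simp [hx]
      simp [hA]
  have hcross : μ[fun ω => (W ω - A ω) * A ω|C] =ᵐ[μ] 0 :=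
    condexp_mul_eq_zero hCm hm hWA2 hA2 stronglyMeasurable_condExp h0
  have hcross' : μ[fun ω => (W ω - A ω) * (2 * A ω)|C] =ᵐ[μ] 0 :=
    condexp_mul_eq_zero hCm hm hWA2 (hA2.const_mul 2)
      (stronglyMeasurable_condExp.const_mul 2) h0
  have hint1 : Integrable (fun ω => (W ω - A ω) ^ 2) μ := hWA2.integrable_sq
  have hintc : Integrable (fun ω => (W ω - A ω) * (2 * A ω)) μ := by
    have := integrable_mul_of_memℒp_two hWA2 (hA2.const_mul 2)
    exact this
  have hintW : Integrable (fun ω => W ω ^ 2) μ := hW.integrable_sq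
  have hintA : Integrable (fun ω => A ω ^ 2) μ := hA2.integrable_sq
  have hsub : μ[fun ω => W ω ^ 2|C] - μ[fun ω => A ω ^ 2|C] =ᵐ[μ]
      μ[fun ω => W ω ^ 2 - A ω ^ 2|C] := (condExp_sub hintW hintA C).symm
  have hsplit : μ[fun ω => W ω ^ 2 - A ω ^ 2|C] =ᵐ[μ]
      μ[fun ω => (W ω - A ω) ^ 2|C] + μ[fun ω => (W ω - A ω) * (2 * A ω)|C] :=
    (condExp_congr_ae (ae_of_all _ fun x => by
      show W x ^ 2 - A x ^ 2 = (W x - A x) ^ 2 + (W x - A x) * (2 * A x); ring)).trans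
      (condExp_add hint1 hintc C)
  have hnn : 0 ≤ᵐ[μ] μ[fun ω => (W ω - A ω) ^ 2|C] :=
    condExp_nonneg (ae_of_all _ fun x => sq_nonneg _)
  filter_upwards [hsub, hsplit, hcross', hnn] with x h1 h2 h3 h4
  have h1' : (μ[fun ω => W ω ^ 2|C]) x - (μ[fun ω => A ω ^ 2|C]) x
      = (μ[fun ω => W ω ^ 2 - A ω ^ 2|C]) x := h1
  have h2' : (μ[fun ω => W ω ^ 2 - A ω ^ 2|C]) x
      = (μ[fun ω => (W ω - A ω) ^ 2|C]) x + (μ[fun ω => (W ω - A ω) * (2 * A ω)|C]) x := h2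
  have h3' : (μ[fun ω => (W ω - A ω) * (2 * A ω)|C]) x = 0 := h3
  have h4' : (0 : ℝ) ≤ (μ[fun ω => (W ω - A ω) ^ 2|C]) x := h4
  simp only [hA] at h1' h2' h3' h4' ⊢
  linarith

theorem condexp_sq_add_of_orth [IsProbabilityMeasure μ] {C : MeasurableSpace Ω} (hCm : C ≤ m)
    (hm : m ≤ m0) {f g : Ω → ℝ} (hf : MemLp f 2 μ) (hg : MemLp g 2 μ)
    (hgm : StronglyMeasurable[m] g) (hf0 : μ[f|m] =ᵐ[μ] 0) :
    μ[fun ω => (f ω + g ω) ^ 2|C] =ᵐ[μ] μ[fun ω => f ω ^ 2|C] + μ[fun ω => g ω ^ 2|C] := by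
  have hcross : μ[fun ω => f ω * (2 * g ω)|C] =ᵐ[μ] 0 :=
    condexp_mul_eq_zero hCm hm hf (hg.const_mul 2) (hgm.const_mul 2) hf0
  have hint1 : Integrable (fun ω => f ω ^ 2) μ := hf.integrable_sq
  have hintc : Integrable (fun ω => f ω * (2 * g ω)) μ :=
    integrable_mul_of_memℒp_two hf (hg.const_mul 2)
  have hint2 : Integrable (fun ω => g ω ^ 2) μ := hg.integrable_sq
  have h1 : μ[fun ω => (f ω + g ω) ^ 2|C] =ᵐ[μ]
      μ[(fun ω => f ω ^ 2) + ((fun ω => f ω * (2 * g ω)) + fun ω => g ω ^ 2)|C] :=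
    condExp_congr_ae (ae_of_all _ fun x => by
      show (f x + g x) ^ 2 = ((fun ω => f ω ^ 2) + ((fun ω => f ω * (2 * g ω))
        + fun ω => g ω ^ 2)) x
      simp only [Pi.add_apply]
      ring)
  have h2 := condExp_add (m := C) (μ := μ) hint1 (hintc.add hint2)
  have h3 := condExp_add (m := C) (μ := μ) hintc hint2
  filter_upwards [h1, h2, h3, hcross] with x e1 e2 e3 e4
  simp only [Pi.add_apply] at e1 e2 e3 ⊢
  rw [e1, e2, e3, e4]
  simp

theorem condexp_sq_le_of_orth [IsProbabilityMeasure μ] {C : MeasurableSpace Ω} (hCm : C ≤ m)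
    (hm : m ≤ m0) {f g : Ω → ℝ} (hf : MemLp f 2 μ) (hg : MemLp g 2 μ)
    (hgm : StronglyMeasurable[m] g) (hf0 : μ[f|m] =ᵐ[μ] 0) :
    μ[fun ω => f ω ^ 2|C] ≤ᵐ[μ] μ[fun ω => (f ω + g ω) ^ 2|C] := by
  have h := condexp_sq_add_of_orth hCm hm hf hg hgm hf0
  have hnn : 0 ≤ᵐ[μ] μ[fun ω => g ω ^ 2|C] := condExp_nonneg (ae_of_all _ fun x => sq_nonneg _)
  filter_upwards [h, hnn] with x e1 e2
  simp only [Pi.add_apply] at e1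
  have e2' : (0:ℝ) ≤ (μ[fun ω => g ω ^ 2|C]) x := e2
  rw [e1]
  linarith

end StandardSection

section DropSection
variable {Ω : Type*} {mA mB mC : MeasurableSpace Ω} [m0 : MeasurableSpace Ω] {μ : Measure Ω}

theorem condexp_sup_indep [IsProbabilityMeasure μ]
    (hA : mA ≤ m0) (hB : mB ≤ m0) (hCA : mC ≤ mA)
    (hindep : Indep mA mB μ) {h : Ω → ℝ} (hh : Integrable h μ)
    (hhm : StronglyMeasurable[mA] h) : μ[h|mC ⊔ mB] =ᵐ[μ] μ[h|mC] := by
  have hC : mC ≤ m0 := hCA.trans hA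
  have hCB : mC ⊔ mB ≤ m0 := sup_le hC hB
  have key : ∀ (w : Ω → ℝ), Integrable w μ → StronglyMeasurable[mA] w →
      ∀ c b : Set Ω, MeasurableSet[mC] c → MeasurableSet[mB] b →
      ∫ x in c ∩ b, w x ∂μ = (∫ x in c, w x ∂μ) * (μ b).toReal := by
    intro w hwi hwm c b hc hb
    have hbm0 : MeasurableSet[m0] b := hB b hb
    have hcm0 : MeasurableSet[m0] c := hC c hc
    have hXm : Measurable[mA] (c.indicator w) := hwm.measurable.indicator (hCA c hc)
    have hYm : Measurable[mB] (b.indicator (fun _ => (1:ℝ))) := measurable_const.indicator hb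
    have hXY : IndepFun (c.indicator w) (b.indicator (fun _ => (1:ℝ))) μ := by
      rw [IndepFun_iff_Indep]
      exact indep_of_indep_of_le_left
        (indep_of_indep_of_le_right hindep (measurable_iff_comap_le.1 hYm))
        (measurable_iff_comap_le.1 hXm)
    have hmul := hXY.integral_fun_mul_eq_mul_integral (hwi.indicator hcm0).aestronglyMeasurable
      ((integrable_const (1:ℝ)).indicator hbm0).aestronglyMeasurable
    have hpt : (c ∩ b).indicator w = c.indicator w * b.indicator (fun _ => (1:ℝ)) := by
      funext x
      by_cases hx1 : x ∈ c <;> by_cases hx2 : x ∈ b <;>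
        simp [Set.indicator, hx1, hx2, Set.mem_inter_iff]
    calc ∫ x in c ∩ b, w x ∂μ = ∫ x, (c ∩ b).indicator w x ∂μ :=
          (integral_indicator (hcm0.inter hbm0)).symm
      _ = ∫ x, (c.indicator w * b.indicator (fun _ => (1:ℝ))) x ∂μ := by rw [hpt]
      _ = (∫ x, c.indicator w x ∂μ) * ∫ x, b.indicator (fun _ => (1:ℝ)) x ∂μ := hmul
      _ = (∫ x in c, w x ∂μ) * (μ b).toReal := by
          rw [integral_indicator hcm0, integral_indicator_const _ hbm0]
          simp [mul_comm]
          exact mul_comm _ _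
  set π : Set (Set Ω) := {s | ∃ c b, MeasurableSet[mC] c ∧ MeasurableSet[mB] b ∧ s = c ∩ b}
    with hπ
  have hgen : mC ⊔ mB = MeasurableSpace.generateFrom π := by
    refine le_antisymm (sup_le ?_ ?_) (MeasurableSpace.generateFrom_le ?_)
    · exact fun s hs => MeasurableSpace.measurableSet_generateFrom
        ⟨s, Set.univ, hs, MeasurableSet.univ, by simp⟩
    · exact fun s hs => MeasurableSpace.measurableSet_generateFrom
        ⟨Set.univ, s, MeasurableSet.univ, hs, by simp⟩
    · rintro s ⟨c, b, hc, hb, rfl⟩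
      exact ((le_sup_left : mC ≤ mC ⊔ mB) c hc).inter ((le_sup_right : mB ≤ mC ⊔ mB) b hb)
  have hpi : IsPiSystem π := by
    rintro s ⟨c1, b1, hc1, hb1, rfl⟩ t ⟨c2, b2, hc2, hb2, rfl⟩ -
    exact ⟨c1 ∩ c2, b1 ∩ b2, hc1.inter hc2, hb1.inter hb2, by
      rw [Set.inter_inter_inter_comm]⟩
  have hcondint : Integrable (μ[h|mC]) μ := integrable_condExp
  have hsets : ∀ s, MeasurableSet[mC ⊔ mB] s →
      ∫ x in s, (μ[h|mC]) x ∂μ = ∫ x in s, h x ∂μ := by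
    refine fun s hs => MeasurableSpace.induction_on_inter (m := mC ⊔ mB)
      (C := fun s _ => ∫ x in s, (μ[h|mC]) x ∂μ = ∫ x in s, h x ∂μ) hgen hpi ?_ ?_ ?_ ?_ s hs
    · simp
    · rintro t ⟨c, b, hc, hb, rfl⟩
      rw [key h hh hhm c b hc hb,
        key (μ[h|mC]) hcondint (stronglyMeasurable_condExp.mono hCA) c b hc hb,
        setIntegral_condExp hC hh hc]
    · intro t htm ht
      have h1 := integral_add_compl (hCB t htm) hh
      have h2 := integral_add_compl (hCB t htm) hcondint
      have h3 : ∫ x, (μ[h|mC]) x ∂μ = ∫ x, h x ∂μ := integral_condExp hC (μ := μ) (f := h)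
      linarith
    · intro f hdisj hmeas hind
      rw [integral_iUnion (fun i => hCB _ (hmeas i)) hdisj hcondint.integrableOn,
        integral_iUnion (fun i => hCB _ (hmeas i)) hdisj hh.integrableOn]
      exact tsum_congr hind
  exact (ae_eq_condExp_of_forall_setIntegral_eq hCB hh
    (fun s _ _ => integrable_condExp.integrableOn) (fun s hs _ => hsets s hs)
    ((stronglyMeasurable_condExp (m := mC) (μ := μ) (f := h)).mono
      (le_sup_left : mC ≤ mC ⊔ mB)).aestronglyMeasurable).symm

end DropSection

/-- Proposition 4.7（subadditivity of conditional variance: let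
`ℰ ∪ {𝒢(i,j)}_{1≤i≤j≤N}` be independent σ-fields generating `𝒢`, `Z` a
square-integrable `𝒢`-measurable random variable, and for each `k` let `Z_k` be a
square-integrable random variable measurable with respect to the σ-field `𝒢̂_k`
generated by `ℰ` and the `𝒢(i,j)` with `k ∉ {i,j}`.  Then almost surely
`E(|Z − E(Z|ℰ)|² | ℰ) ≤ Σ_k E(|Z − Z_k|² | ℰ)`. -/
theorem conditional_variance_subadditive {Ω : Type*} [m0 : MeasurableSpace Ω]
    (μ : Measure Ω) [IsProbabilityMeasure μ]
    (N : ℕ) (E : MeasurableSpace Ω) (G : Fin N → Fin N → MeasurableSpace Ω)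
    (hE : E ≤ m0) (hG : ∀ i j, G i j ≤ m0)
    (hindep : iIndep (fun o : Option {p : Fin N × Fin N // p.1 ≤ p.2} =>
      Option.elim o E (fun p => G p.1.1 p.1.2)) μ)
    (Z : Ω → ℝ)
    (hZmeas : StronglyMeasurable[E ⊔ ⨆ p : {p : Fin N × Fin N // p.1 ≤ p.2}, G p.1.1 p.1.2] Z)
    (hZ2 : MemLp Z 2 μ)
    (Zk : Fin N → Ω → ℝ)
    (hZkmeas : ∀ k : Fin N, StronglyMeasurable[E ⊔
      ⨆ p : {p : Fin N × Fin N // p.1 ≤ p.2 ∧ p.1 ≠ k ∧ p.2 ≠ k}, G p.1.1 p.1.2] (Zk k))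
    (hZk2 : ∀ k, MemLp (Zk k) 2 μ) :
    ∀ᵐ ω ∂μ,
      (μ[fun ω' => (Z ω' - (μ[Z | E]) ω') ^ 2 | E]) ω ≤
        ∑ k : Fin N, (μ[fun ω' => (Z ω' - Zk k ω') ^ 2 | E]) ω := by
  classical
  set F : ℕ → MeasurableSpace Ω := fun n =>
    E ⊔ ⨆ (p : {p : Fin N × Fin N // p.1 ≤ p.2}) (_ : (p.1.2 : ℕ) < n), G p.1.1 p.1.2 with hF
  have hFle : ∀ n, F n ≤ m0 := fun n =>
    sup_le hE (iSup_le fun p => iSup_le fun _ => hG _ _)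
  have hEF : ∀ n, E ≤ F n := fun n => le_sup_left
  have hF0 : F 0 = E := by
    have : (⨆ (p : {p : Fin N × Fin N // p.1 ≤ p.2}) (_ : (p.1.2 : ℕ) < 0),
        G p.1.1 p.1.2) = ⊥ := by
      simp
    rw [hF]
    simp only [this, sup_bot_eq]
  have hFmono : Monotone F := by
    intro a b hab
    refine sup_le_sup_left (iSup_mono fun p => iSup_le fun h => ?_) E
    exact le_iSup (fun _ : (p.1.2 : ℕ) < b => G p.1.1 p.1.2) (lt_of_lt_of_le h hab)
  have hFN : (E ⊔ ⨆ p : {p : Fin N × Fin N // p.1 ≤ p.2}, G p.1.1 p.1.2) ≤ F N := by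
    refine sup_le le_sup_left (iSup_le fun p => ?_)
    exact le_sup_of_le_right (le_iSup_of_le p
      (le_iSup (fun _ : (p.1.2 : ℕ) < N => G p.1.1 p.1.2) p.1.2.isLt))
  have hZint : Integrable Z μ := hZ2.integrable (by norm_num)
  set M : ℕ → Ω → ℝ := fun n => μ[Z|F n] with hM
  have hM2 : ∀ n, MemLp (M n) 2 μ := fun n => memℒp_two_condexp (hFle n) hZ2
  have hMN : M N = Z := condExp_of_stronglyMeasurable (hFle N) (hZmeas.mono hFN) hZint
  have hM0 : M 0 = μ[Z|E] := by
    rw [hM]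
    show μ[Z|F 0] = μ[Z|E]
    rw [hF0]
  -- the inductive bound
  have key : ∀ n, n ≤ N →
      μ[fun ω => (M n ω - M 0 ω) ^ 2|E] ≤ᵐ[μ]
        ∑ k ∈ Finset.univ.filter (fun k : Fin N => (k : ℕ) < n),
          μ[fun ω' => (Z ω' - Zk k ω') ^ 2|E] := by
    intro n
    induction n with
    | zero =>
      intro _
      have h0 : μ[fun ω => (M 0 ω - M 0 ω) ^ 2|E] =ᵐ[μ] 0 := by
        refine (condExp_congr_ae (g := (0 : Ω → ℝ)) (ae_of_all _ fun x => by
          show (M 0 x - M 0 x) ^ 2 = 0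
          simp)).trans ?_
        rw [condExp_zero]
      have hfilter : Finset.univ.filter (fun k : Fin N => (k : ℕ) < 0) = ∅ := by
        simp
      rw [hfilter, Finset.sum_empty]
      filter_upwards [h0] with x hx
      exact hx.le
    | succ n ih =>
      intro hn1
      have hn : n < N := hn1
      set k : Fin N := ⟨n, hn⟩ with hk
      set B : MeasurableSpace Ω :=
        ⨆ (p : {p : Fin N × Fin N // p.1 ≤ p.2}) (_ : (p.1.2 : ℕ) = n), G p.1.1 p.1.2 with hB
      have hBle : B ≤ m0 := iSup_le fun p => iSup_le fun _ => hG _ _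
      set Ghat : MeasurableSpace Ω :=
        E ⊔ ⨆ p : {p : Fin N × Fin N // p.1 ≤ p.2 ∧ p.1 ≠ k ∧ p.2 ≠ k}, G p.1.1 p.1.2
        with hGhat
      have hGhatle : Ghat ≤ m0 := sup_le hE (iSup_le fun p => hG _ _)
      have hFn_Ghat : F n ≤ Ghat := by
        refine sup_le le_sup_left (iSup_le fun p => iSup_le fun h => ?_)
        have h2k : p.1.2 < k := by
          rw [Fin.lt_def]
          exact h
        have h1k : p.1.1 < k := lt_of_le_of_lt p.2 h2k
        exact le_sup_of_le_right
          (le_iSup_of_le ⟨p.1, p.2, ne_of_lt h1k, ne_of_lt h2k⟩ le_rfl)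
      have hFsucc : F (n + 1) = F n ⊔ B := by
        refine le_antisymm ?_ ?_
        · refine sup_le (le_trans (hEF n) le_sup_left) (iSup_le fun p => iSup_le fun h => ?_)
          rcases Nat.lt_succ_iff_lt_or_eq.1 h with h' | h'
          · exact le_sup_of_le_left (le_sup_of_le_right
              (le_iSup_of_le p (le_iSup (fun _ : (p.1.2 : ℕ) < n => G p.1.1 p.1.2) h')))
          · exact le_sup_of_le_right
              (le_iSup_of_le p (le_iSup (fun _ : (p.1.2 : ℕ) = n => G p.1.1 p.1.2) h'))
        · refine sup_le (hFmono (Nat.le_succ n)) (iSup_le fun p => iSup_le fun h => ?_)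
          exact le_sup_of_le_right
            (le_iSup_of_le p (le_iSup (fun _ : (p.1.2 : ℕ) < n + 1 => G p.1.1 p.1.2)
              (h ▸ Nat.lt_succ_self n)))
      -- independence of Ghat and B
      have hindepGB : Indep Ghat B μ := by
        set κ := fun o : Option {p : Fin N × Fin N // p.1 ≤ p.2} =>
          Option.elim o E (fun p => G p.1.1 p.1.2) with hκ
        have hκle : ∀ o, κ o ≤ m0 := by
          rintro (_ | p)
          · exact hE
          · exact hG _ _
        set T : Set (Option {p : Fin N × Fin N // p.1 ≤ p.2}) :=
          {o | ∃ p, o = some p ∧ p.1.2 = k} with hT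
        have hST : Disjoint Tᶜ T := disjoint_compl_left
        have hindep2 : Indep (⨆ o ∈ Tᶜ, κ o) (⨆ o ∈ T, κ o) μ :=
          indep_iSup_of_disjoint hκle hindep hST
        refine indep_of_indep_of_le_left (indep_of_indep_of_le_right hindep2 ?_) ?_
        · refine iSup_le fun p => iSup_le fun hpk => ?_
          refine le_trans ?_ (le_iSup₂ (f := fun o (_ : o ∈ T) => κ o) (some p) ?_)
          · exact le_rfl
          · exact ⟨p, rfl, Fin.ext hpk⟩
        · refine sup_le ?_ (iSup_le fun p => ?_)
          · refine le_trans ?_ (le_iSup₂ (f := fun o (_ : o ∈ Tᶜ) => κ o) none ?_)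
            · exact le_rfl
            · rintro ⟨q, hq, _⟩
              cases hq
          · refine le_trans ?_ (le_iSup₂ (f := fun o (_ : o ∈ Tᶜ) => κ o)
              (some ⟨p.1, p.2.1⟩) ?_)
            · exact le_rfl
            · rintro ⟨q, hq, hqk⟩
              have : q = ⟨p.1, p.2.1⟩ := by
                cases Option.some.inj hq
                rfl
              rw [this] at hqk
              exact p.2.2.2 hqk
      -- conditional expectation of Zk k does not change
      have hZkint : Integrable (Zk k) μ := (hZk2 k).integrable (by norm_num)
      have hZkcond : μ[Zk k|F (n + 1)] =ᵐ[μ] μ[Zk k|F n] := by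
        rw [hFsucc]
        exact condexp_sup_indep (m0 := m0) hGhatle hBle hFn_Ghat hindepGB hZkint (hZkmeas k)
      -- increment
      set D : Ω → ℝ := fun ω => M (n + 1) ω - M n ω with hD
      have hD2 : MemLp D 2 μ := by
        have := (hM2 (n + 1)).sub (hM2 n)
        exact this
      have hMnn1 : μ[M (n + 1)|F n] =ᵐ[μ] M n := condExp_condExp_of_le
        (hFmono (Nat.le_succ n)) (hFle (n + 1))
      have hMnn : μ[M n|F n] =ᵐ[μ] M n := condExp_condExp_of_le le_rfl (hFle n)
      have hD0 : μ[D|F n] =ᵐ[μ] 0 := by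
        have hsub := condExp_sub (m := F n) (μ := μ) integrable_condExp integrable_condExp
          (f := M (n + 1)) (g := M n)
        refine (condExp_congr_ae (ae_of_all _ fun x => rfl)).trans (hsub.trans ?_)
        filter_upwards [hMnn1, hMnn] with x h1 h2
        simp [Pi.sub_apply, h1, h2]
      -- step 1 : decomposition
      have hg2 : MemLp (fun ω => M n ω - M 0 ω) 2 μ := by
        have := (hM2 n).sub (hM2 0)
        exact this
      have hgm : StronglyMeasurable[F n] (fun ω => M n ω - M 0 ω) := by
        have h1 : StronglyMeasurable[F n] (M n) := stronglyMeasurable_condExp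
        have h2 : StronglyMeasurable[F n] (M 0) :=
          (stronglyMeasurable_condExp (m := F 0)).mono (hFmono (Nat.zero_le n))
        exact h1.sub h2
      have step1 : μ[fun ω => (M (n + 1) ω - M 0 ω) ^ 2|E] =ᵐ[μ]
          μ[fun ω => D ω ^ 2|E] + μ[fun ω => (M n ω - M 0 ω) ^ 2|E] := by
        have := condexp_sq_add_of_orth (μ := μ) (hEF n) (hFle n) hD2 hg2 hgm hD0
        refine (condExp_congr_ae (ae_of_all _ fun x => ?_)).trans this
        show (M (n + 1) x - M 0 x) ^ 2 = (D x + (M n x - M 0 x)) ^ 2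
        rw [hD]
        ring_nf
      -- step 2 : bound on the increment
      have step2 : μ[fun ω => D ω ^ 2|E] ≤ᵐ[μ] μ[fun ω' => (Z ω' - Zk k ω') ^ 2|E] := by
        set W : Ω → ℝ := fun ω => Z ω - Zk k ω with hW
        have hW2 : MemLp W 2 μ := by
          have := hZ2.sub (hZk2 k)
          exact this
        have hWint : Integrable W μ := hW2.integrable (by norm_num)
        set A' : Ω → ℝ := μ[W|F (n + 1)] with hA'
        set B' : Ω → ℝ := μ[W|F n] with hB'
        have hA'2 : MemLp A' 2 μ := memℒp_two_condexp (hFle (n + 1)) hW2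
        have hB'2 : MemLp B' 2 μ := memℒp_two_condexp (hFle n) hW2
        -- D = A' - B' a.e.
        have hA'eq : A' =ᵐ[μ] fun ω => M (n + 1) ω - (μ[Zk k|F (n + 1)]) ω := by
          have := condExp_sub (m := F (n + 1)) (μ := μ) hZint hZkint
          exact (condExp_congr_ae (ae_of_all _ fun x => rfl)).trans this
        have hB'eq : B' =ᵐ[μ] fun ω => M n ω - (μ[Zk k|F n]) ω := by
          have := condExp_sub (m := F n) (μ := μ) hZint hZkint
          exact (condExp_congr_ae (ae_of_all _ fun x => rfl)).trans this
        have hDeq : D =ᵐ[μ] fun ω => A' ω - B' ω := by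
          filter_upwards [hA'eq, hB'eq, hZkcond] with x h1 h2 h3
          have h1' : A' x = M (n + 1) x - (μ[Zk k|F (n + 1)]) x := h1
          have h2' : B' x = M n x - (μ[Zk k|F n]) x := h2
          have h3' : (μ[Zk k|F (n + 1)]) x = (μ[Zk k|F n]) x := h3
          show D x = A' x - B' x
          rw [h1', h2', h3', hD]
          ring
        have hAB0 : μ[fun ω => A' ω - B' ω|F n] =ᵐ[μ] 0 := by
          have hsub := condExp_sub (m := F n) (μ := μ) integrable_condExp integrable_condExp
            (f := A') (g := B')
          have hA'n : μ[A'|F n] =ᵐ[μ] B' := condExp_condExp_of_le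
            (hFmono (Nat.le_succ n)) (hFle (n + 1))
          have hB'n : μ[B'|F n] =ᵐ[μ] B' := condExp_condExp_of_le le_rfl (hFle n)
          refine (condExp_congr_ae (ae_of_all _ fun x => rfl)).trans (hsub.trans ?_)
          filter_upwards [hA'n, hB'n] with x h1 h2
          simp [Pi.sub_apply, h1, h2]
        have hAB2 : MemLp (fun ω => A' ω - B' ω) 2 μ := by
          have := hA'2.sub hB'2
          exact this
        have hD2E : μ[fun ω => D ω ^ 2|E] =ᵐ[μ] μ[fun ω => (A' ω - B' ω) ^ 2|E] :=
          condExp_congr_ae (hDeq.mono fun x hx => by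
            show D x ^ 2 = (A' x - B' x) ^ 2
            rw [show D x = A' x - B' x from hx])
        have hle1 : μ[fun ω => (A' ω - B' ω) ^ 2|E] ≤ᵐ[μ] μ[fun ω => A' ω ^ 2|E] := by
          have h := condexp_sq_le_of_orth (μ := μ) (hEF n) (hFle n) hAB2 hB'2
            stronglyMeasurable_condExp hAB0
          have heq : μ[fun ω => (A' ω - B' ω + B' ω) ^ 2|E] =ᵐ[μ]
              μ[fun ω => A' ω ^ 2|E] :=
            condExp_congr_ae (ae_of_all _ fun x => by
              show (A' x - B' x + B' x) ^ 2 = A' x ^ 2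
              ring)
          exact h.trans heq.le
        have hle2 : μ[fun ω => A' ω ^ 2|E] ≤ᵐ[μ] μ[fun ω => W ω ^ 2|E] :=
          condexp_sq_condexp_le (hEF (n + 1)) (hFle (n + 1)) hW2
        exact hD2E.le.trans (hle1.trans hle2)
      -- combine
      have hfilter : Finset.univ.filter (fun j : Fin N => (j : ℕ) < n + 1) =
          insert k (Finset.univ.filter (fun j : Fin N => (j : ℕ) < n)) := by
        ext j
        simp only [Finset.mem_filter, Finset.mem_insert, Finset.mem_univ, true_and]
        rw [Nat.lt_succ_iff_lt_or_eq]
        constructor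
        · rintro (h | h)
          · exact Or.inr h
          · exact Or.inl (Fin.ext h)
        · rintro (h | h)
          · exact Or.inr (by rw [h])
          · exact Or.inl h
      have hknot : k ∉ Finset.univ.filter (fun j : Fin N => (j : ℕ) < n) := by
        simp [hk]
      rw [hfilter, Finset.sum_insert hknot]
      have ihn := ih (le_of_lt hn)
      filter_upwards [step1, step2, ihn] with x e1 e2 e3
      have e1' : (μ[fun ω => (M (n + 1) ω - M 0 ω) ^ 2|E]) x =
          (μ[fun ω => D ω ^ 2|E]) x + (μ[fun ω => (M n ω - M 0 ω) ^ 2|E]) x := e1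
      simp only [Pi.add_apply]
      linarith
  -- conclusion
  have hkey := key N le_rfl
  have hfiltN : Finset.univ.filter (fun j : Fin N => (j : ℕ) < N) = Finset.univ :=
    Finset.filter_true_of_mem fun j _ => j.isLt
  rw [hfiltN] at hkey
  have hZeq : (fun ω => (M N ω - M 0 ω) ^ 2) = fun ω' => (Z ω' - (μ[Z|E]) ω') ^ 2 := by
    funext x
    rw [hMN, hM0]
  rw [hZeq] at hkey
  filter_upwards [hkey] with x hx
  simpa [Finset.sum_apply] using hx
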